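/- (Lemma: optimal price under small spread.) Suppose b_lb ∈ (0, b_1) satisfies φ(b_lb) = P, and suppose b_1 < 4·b_lb. Then for every λ ∈ [b_lb, b_1), the relay revenue satisfies λ·Σ_{j=1}^N max{0, (Q_j·F_j/√b_j)(1/√λ − 1/√b_j)} = λ·φ(λ) ≤ b_lb·P, with equality at λ = b_lb; i.e., the price b_lb maximizes λ·φ(λ) over [b_lb, b_1). -/

import Mathlib

open Finset

/-- Lemma: optimal price under small spread: Suppose `b_lb ∈ (0, b_1)`
satisfies `φ(b_lb) = P`, and suppose `b_1 < 4·b_lb`. Then for every `λ ∈ [b_lb, b_1)`,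
the relay revenue satisfies `λ·φ(λ) ≤ b_lb·P`, with equality at `λ = b_lb`; i.e., the
price `b_lb` maximizes `λ·φ(λ)` over `[b_lb, b_1)`. -/
theorem stmt_17 (N : ℕ) (hN : 1 ≤ N)
    (Q F G : ℕ → ℝ)
    (hQ : ∀ i ∈ Finset.Icc 1 N, 0 < Q i)
    (hF : ∀ i ∈ Finset.Icc 1 N, 0 < F i)
    (hG : ∀ i ∈ Finset.Icc 1 N, 0 < G i)
    (b : ℕ → ℝ) (hb : ∀ i, b i = Q i * F i * G i / (Q i * F i + 1))
    (hord : ∀ i, 1 ≤ i → i < N → b (i + 1) ≤ b i)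
    (P : ℝ) (hP : 0 < P)
    (φ : ℝ → ℝ)
    (hφ : ∀ x, φ x = ∑ i ∈ Finset.Icc 1 N,
      max 0 ((Q i * F i / Real.sqrt (b i)) * (1 / Real.sqrt x - 1 / Real.sqrt (b i))))
    (blb : ℝ) (hblb : blb ∈ Set.Ioo 0 (b 1)) (heq : φ blb = P)
    (hspread : b 1 < 4 * blb) :
    (∀ lam ∈ Set.Ico blb (b 1), lam * φ lam ≤ blb * P) ∧
    blb * φ blb = blb * P := by

  obtain ⟨hblb0, hblb1⟩ := hblb
  refine ⟨?_, by rw [heq]⟩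
  intro lam hlam
  obtain ⟨hlam1, hlam2⟩ := hlam
  have hlam0 : 0 < lam := lt_of_lt_of_le hblb0 hlam1
  have hchain : ∀ j, 1 ≤ j → j ≤ N → b j ≤ b 1 := by
    intro j
    induction j with
    | zero => omega
    | succ k ih =>
      intro _ hkN
      rcases Nat.eq_zero_or_pos k with hk | hk
      · subst hk; exact le_rfl
      · exact le_trans (hord k hk (by omega)) (ih hk (by omega))
  rw [← heq, hφ, hφ, Finset.mul_sum, Finset.mul_sum]
  apply Finset.sum_le_sum
  intro i hi
  simp only [Finset.mem_Icc] at hi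
  have hQi := hQ i (by simp [hi])
  have hFi := hF i (by simp [hi])
  have hGi := hG i (by simp [hi])
  have hbi : 0 < b i := by
    rw [hb]
    have : 0 < Q i * F i + 1 := by positivity
    positivity
  have hbile : b i < 4 * blb := lt_of_le_of_lt (hchain i hi.1 hi.2) hspread
  set sl := Real.sqrt lam with hsl
  set sb := Real.sqrt blb with hsb
  set si := Real.sqrt (b i) with hsi
  have hsl0 : 0 < sl := Real.sqrt_pos.2 hlam0
  have hsb0 : 0 < sb := Real.sqrt_pos.2 hblb0
  have hsi0 : 0 < si := Real.sqrt_pos.2 hbi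
  have hsl2 : sl ^ 2 = lam := Real.sq_sqrt hlam0.le
  have hsb2 : sb ^ 2 = blb := Real.sq_sqrt hblb0.le
  have hsi2 : si ^ 2 = b i := Real.sq_sqrt hbi.le
  have hsbl : sb ≤ sl := Real.sqrt_le_sqrt hlam1
  have hsi2b : si < 2 * sb := by
    have h4 : Real.sqrt (4 * blb) = 2 * sb := by
      rw [show (4:ℝ) * blb = 2 ^ 2 * blb by ring, Real.sqrt_mul (by positivity),
        Real.sqrt_sq (by norm_num)]
    rw [hsi, ← h4]
    exact Real.sqrt_lt_sqrt hbi.le hbile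
  have hc : 0 ≤ Q i * F i / si := by positivity
  rw [mul_max_of_nonneg _ _ hlam0.le, mul_max_of_nonneg _ _ hblb0.le, mul_zero, mul_zero]
  apply max_le_max le_rfl
  rw [mul_left_comm, mul_left_comm blb]
  apply mul_le_mul_of_nonneg_left _ hc
  have key : sl * si - lam ≤ sb * si - blb := by
    nlinarith [mul_nonneg (sub_nonneg.2 hsbl) (by linarith : (0:ℝ) ≤ sl + sb - si)]
  have e1 : lam * (1 / sl - 1 / si) = (sl * si - lam) / si := by
    rw [← hsl2]; field_simp
  have e2 : blb * (1 / sb - 1 / si) = (sb * si - blb) / si := by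
    rw [← hsb2]; field_simp
  rw [e1, e2]
  gcongr
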